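/- Let S be a commutative semigroup in which every element is an idempotent (s·s = s for all s ∈ S), let K be a field, and let KS be the semigroup algebra of S over K. Then every finitely generated (two-sided) ideal I of KS is principal; moreover, I is generated by an idempotent element u ∈ I which acts as a two-sided multiplicative identity on I (u·y = y = y·u for all y ∈ I). -/

import Mathlib

open scoped Classical

namespace SemilatticeAlgAux

variable {K S : Type*} [Field K] [CommSemigroup S]

lemma absorb (hS : ∀ s : S, s * s = s) (a b : S) : (a * b) * a = a * b := by
  rw [mul_comm a b, mul_assoc, hS]

lemma le_mul_iff (hS : ∀ s : S, s * s = s) (m s t : S) :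
    m * (s * t) = m ↔ (m * s = m ∧ m * t = m) := by
  constructor
  · intro h
    constructor
    · calc m * s = (m * (s * t)) * s := by rw [h]
        _ = m * ((s * t) * s) := mul_assoc _ _ _
        _ = m * (s * t) := by rw [absorb hS]
        _ = m := h
    · calc m * t = (m * (s * t)) * t := by rw [h]
        _ = m * ((s * t) * t) := mul_assoc _ _ _
        _ = m * (t * (s * t)) := by rw [mul_comm (s*t) t]
        _ = m * ((t * s) * t) := by rw [← mul_assoc t s t]
        _ = m * (t * s) := by rw [absorb hS]
        _ = m * (s * t) := by rw [mul_comm t s]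
        _ = m := h
  · rintro ⟨h1, h2⟩
    rw [← mul_assoc, h1, h2]

/-- The character of the semigroup algebra attached to `m : S`. -/
noncomputable def chi (hS : ∀ s : S, s * s = s) (m : S) :
    MonoidAlgebra K S →ₙₐ[K] K :=
  MonoidAlgebra.liftMagma K
    { toFun := fun s => if m * s = m then (1 : K) else 0
      map_mul' := fun s t => by
        beta_reduce
        rw [le_mul_iff hS]
        by_cases h1 : m * s = m <;> by_cases h2 : m * t = m <;> simp [h1, h2] }

lemma chi_apply (hS : ∀ s : S, s * s = s) (m : S) (f : MonoidAlgebra K S) :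
    chi (K := K) hS m f = ∑ s ∈ f.coeff.support, if m * s = m then f.coeff s else 0 := by
  rw [chi, MonoidAlgebra.liftMagma_apply_apply]
  change Finsupp.liftAddHom _ f.coeff = _
  rw [Finsupp.liftAddHom_apply, Finsupp.sum]
  refine Finset.sum_congr rfl fun s _ => ?_
  simp only [MulHom.coe_mk, AddMonoidHom.flip_apply, smulAddHom_apply, smul_eq_mul, ite_mul, one_mul, zero_mul, mul_ite, mul_one, mul_zero]

lemma exists_max (hS : ∀ s : S, s * s = s) (t : Finset S) (ht : t.Nonempty) :
    ∃ m ∈ t, ∀ x ∈ t, m * x = m → x = m := by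
  classical
  induction t using Finset.induction_on with
  | empty => exact absurd ht (by simp)
  | @insert a s hna ih =>
    by_cases hs : s.Nonempty
    · obtain ⟨m, hm, hmax⟩ := ih hs
      by_cases hma : m * a = m
      · refine ⟨a, Finset.mem_insert_self a s, ?_⟩
        intro x hx hax
        rcases Finset.mem_insert.mp hx with rfl | hx
        · rfl
        · have hmx : m * x = m := by
            calc m * x = (m * a) * x := by rw [hma]
              _ = m * (a * x) := mul_assoc _ _ _
              _ = m * a := by rw [hax]
              _ = m := hma
          have hxm : x = m := hmax x hx hmx
          subst hxm
          -- hax : a * x = a, hma : x * a = x (since m = x)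
          rw [mul_comm] at hax
          rw [hax] at hma
          exact hma.symm
      · refine ⟨m, Finset.mem_insert_of_mem hm, ?_⟩
        intro x hx hmx
        rcases Finset.mem_insert.mp hx with rfl | hx
        · exact absurd hmx hma
        · exact hmax x hx hmx
    · rw [Finset.not_nonempty_iff_eq_empty] at hs
      subst hs
      refine ⟨a, Finset.mem_insert_self a ∅, ?_⟩
      intro x hx _
      simpa using hx

lemma eq_zero_of_chi (hS : ∀ s : S, s * s = s) (g : MonoidAlgebra K S)
    (h : ∀ m : S, chi (K := K) hS m g = 0) : g = 0 := by
  by_contra hg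
  obtain ⟨m, hm, hmax⟩ := exists_max hS g.coeff.support (Finsupp.support_nonempty_iff.mpr fun h => hg (MonoidAlgebra.coeff_eq_zero.mp h))
  have hchi : chi (K := K) hS m g = g.coeff m := by
    rw [chi_apply]
    rw [Finset.sum_eq_single m]
    · rw [if_pos (hS m)]
    · intro b hb hbm
      rw [if_neg]
      exact fun hc => hbm (hmax b hb hc)
    · intro h'
      exact absurd hm h'
  rw [h m] at hchi
  exact Finsupp.mem_support_iff.mp hm hchi.symm


/-- `pw f n = f ^ (n+1)`. -/
noncomputable def pw (f : MonoidAlgebra K S) : ℕ → MonoidAlgebra K S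
  | 0 => f
  | n + 1 => f * pw f n

lemma chi_pw (hS : ∀ s : S, s * s = s) (m : S) (f : MonoidAlgebra K S) (n : ℕ) :
    chi (K := K) hS m (pw f n) = (chi (K := K) hS m f) ^ (n + 1) := by
  induction n with
  | zero => simp [pw]
  | succ n ih =>
    rw [pw, map_mul, ih, pow_succ]
    ring

lemma chi_mem (hS : ∀ s : S, s * s = s) (f : MonoidAlgebra K S) (m : S) :
    chi (K := K) hS m f ∈ insert (0:K) (f.coeff.support.powerset.image fun t => ∑ s ∈ t, f.coeff s) := by
  rw [chi_apply, ← Finset.sum_filter]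
  exact Finset.mem_insert_of_mem (Finset.mem_image.mpr
    ⟨_, Finset.mem_powerset.mpr (Finset.filter_subset _ _), rfl⟩)

lemma exists_idem_single (hS : ∀ s : S, s * s = s) (f : MonoidAlgebra K S) :
    ∃ u : MonoidAlgebra K S, u * u = u ∧ u * f = f ∧ u ∈ TwoSidedIdeal.span {f} := by
  classical
  set T : Finset K := insert (0:K) (f.coeff.support.powerset.image fun t => ∑ s ∈ t, f.coeff s) with hT
  have hmemT : ∀ m : S, chi (K := K) hS m f ∈ T := chi_mem hS f
  set r : Polynomial K := Lagrange.interpolate T id (fun x => if x = 0 then 0 else 1) with hr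
  have heval : ∀ x ∈ T, r.eval x = if x = 0 then 0 else 1 := fun x hx => by
    have h := Lagrange.eval_interpolate_at_node (v := id) (s := T)
      (fun x => if x = 0 then 0 else 1) (Set.injOn_id _) hx
    rw [← hr] at h
    simpa using h
  have hr0 : r.coeff 0 = 0 := by
    rw [Polynomial.coeff_zero_eq_eval_zero, heval 0 (Finset.mem_insert_self _ _), if_pos rfl]
  set u : MonoidAlgebra K S := ∑ k ∈ Finset.range r.natDegree, r.coeff (k+1) • pw f k with hu
  have hchiu : ∀ m : S, chi (K := K) hS m u = r.eval (chi (K := K) hS m f) := by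
    intro m
    rw [hu, map_sum, Polynomial.eval_eq_sum_range, Finset.sum_range_succ']
    simp only [map_smul, chi_pw, smul_eq_mul, hr0, pow_zero, zero_mul, add_zero]
  have huf : u * f = f := by
    have hz : ∀ m : S, chi (K := K) hS m (u * f - f) = 0 := by
      intro m
      rw [map_sub, map_mul, hchiu]
      by_cases hx : chi (K := K) hS m f = 0
      · rw [hx]; ring
      · rw [heval _ (hmemT m), if_neg hx]; ring
    exact sub_eq_zero.mp (eq_zero_of_chi hS _ hz)
  have hupw : ∀ k, u * pw f k = pw f k := by
    intro k
    induction k with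
    | zero => exact huf
    | succ n ih =>
      show u * (f * pw f n) = f * pw f n
      rw [mul_left_comm, ih]
  have huu : u * u = u := by
    nth_rewrite 2 [hu]
    rw [Finset.mul_sum]
    simp_rw [mul_smul_comm, hupw]
    exact hu.symm
  have hpwmem : ∀ k, pw f k ∈ TwoSidedIdeal.span {f} := by
    intro k
    induction k with
    | zero => exact TwoSidedIdeal.subset_span rfl
    | succ n ih => exact (TwoSidedIdeal.span {f}).mul_mem_left f _ ih
  have humem : u ∈ TwoSidedIdeal.span {f} := by
    rw [hu]
    refine sum_mem fun k _ => ?_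
    have h1 : r.coeff (k+1) • pw f k = (r.coeff (k+1) • u) * pw f k := by
      rw [smul_mul_assoc, hupw]
    rw [h1]
    exact (TwoSidedIdeal.span {f}).mul_mem_left _ _ (hpwmem k)
  exact ⟨u, huu, huf, humem⟩


lemma span_le' {R : Type*} [NonUnitalNonAssocRing R] {s : Set R} {I : TwoSidedIdeal R} :
    TwoSidedIdeal.span s ≤ I ↔ s ⊆ I :=
  ⟨fun h x hx => h (TwoSidedIdeal.subset_span hx),
   fun h x hx => TwoSidedIdeal.mem_span_iff.mp hx I h⟩

lemma exists_idem_span (hS : ∀ s : S, s * s = s) (s : Finset (MonoidAlgebra K S)) :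
    ∃ u : MonoidAlgebra K S, u * u = u ∧
      TwoSidedIdeal.span (s : Set (MonoidAlgebra K S)) = TwoSidedIdeal.span {u} := by
  classical
  induction s using Finset.induction_on with
  | empty =>
    refine ⟨0, by simp, le_antisymm ?_ ?_⟩
    · rw [span_le']
      simp
    · rw [span_le']
      intro x hx
      rw [Set.mem_singleton_iff] at hx
      subst hx
      exact TwoSidedIdeal.zero_mem _
  | @insert a s hna ih =>
    obtain ⟨w, hww, hs⟩ := ih
    obtain ⟨e, hee, hea, hemem⟩ := exists_idem_single hS a
    set v : MonoidAlgebra K S := e + w - e * w with hv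
    have h1 : (e * w) * e = e * w := by
      rw [mul_comm e w, mul_assoc, hee]
    have h2 : (e * w) * w = e * w := by
      rw [mul_assoc, hww]
    have hve : v * e = e := by
      rw [hv, sub_mul, add_mul, hee, h1, mul_comm w e, add_sub_cancel_right]
    have hvw : v * w = w := by
      rw [hv, sub_mul, add_mul, hww, h2, add_sub_cancel_left]
    have hvv : v * v = v := by
      nth_rewrite 2 [hv]
      rw [mul_sub, mul_add, hve, hvw, ← mul_assoc, hve, hv]
    have hemem' : e ∈ TwoSidedIdeal.span {v} :=
      hve ▸ (TwoSidedIdeal.span {v}).mul_mem_right v e (TwoSidedIdeal.subset_span rfl)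
    have hwmem' : w ∈ TwoSidedIdeal.span {v} :=
      hvw ▸ (TwoSidedIdeal.span {v}).mul_mem_right v w (TwoSidedIdeal.subset_span rfl)
    refine ⟨v, hvv, le_antisymm ?_ ?_⟩
    · rw [span_le']
      intro x hx
      rw [Finset.coe_insert, Set.mem_insert_iff] at hx
      rcases hx with rfl | hx
      · -- x = a : a = e * a ∈ span {v}
        exact hea ▸ (TwoSidedIdeal.span {v}).mul_mem_right e x hemem'
      · -- x ∈ s : x ∈ span s = span {w} ≤ span {v}
        have : x ∈ TwoSidedIdeal.span ({w} : Set (MonoidAlgebra K S)) := by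
          rw [← hs]
          exact TwoSidedIdeal.subset_span hx
        exact (span_le'.mpr (by simpa using hwmem')) this
    · rw [span_le']
      intro x hx
      rw [Set.mem_singleton_iff] at hx
      subst hx
      have hamem : a ∈ TwoSidedIdeal.span ((insert a s : Finset _) : Set (MonoidAlgebra K S)) :=
        TwoSidedIdeal.subset_span (by simp)
      have heI : e ∈ TwoSidedIdeal.span ((insert a s : Finset _) : Set (MonoidAlgebra K S)) :=
        (span_le'.mpr (by simpa using hamem)) hemem
      have hwI : w ∈ TwoSidedIdeal.span ((insert a s : Finset _) : Set (MonoidAlgebra K S)) := by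
        have hsub : TwoSidedIdeal.span (s : Set (MonoidAlgebra K S)) ≤
            TwoSidedIdeal.span ((insert a s : Finset _) : Set (MonoidAlgebra K S)) := by
          rw [span_le']
          intro y hy
          exact TwoSidedIdeal.subset_span (by simp [hy])
        have : w ∈ TwoSidedIdeal.span (s : Set (MonoidAlgebra K S)) := by
          rw [hs]
          exact TwoSidedIdeal.subset_span rfl
        exact hsub this
      rw [hv]
      exact TwoSidedIdeal.sub_mem _ (TwoSidedIdeal.add_mem _ heI hwI)
        ((TwoSidedIdeal.span _).mul_mem_left e w hwI)

end SemilatticeAlgAux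

/-- Let `S` be a commutative semigroup in which every element is idempotent, `K` a
field, and `KS` the semigroup algebra.  Then every finitely generated two-sided ideal
`I` of `KS` is principal, generated by an idempotent `u ∈ I` which acts as a two-sided
multiplicative identity on `I`. -/
theorem semigroupAlgebra_fg_ideal_principal_idempotent {K S : Type*} [Field K]
    [CommSemigroup S] (hS : ∀ s : S, s * s = s)
    (I : TwoSidedIdeal (MonoidAlgebra K S))
    (hI : ∃ s : Finset (MonoidAlgebra K S), I = TwoSidedIdeal.span (s : Set (MonoidAlgebra K S))) :
    ∃ u : MonoidAlgebra K S, u ∈ I ∧ u * u = u ∧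
      I = TwoSidedIdeal.span {u} ∧ ∀ y ∈ I, u * y = y ∧ y * u = y := by
  obtain ⟨s, rfl⟩ := hI
  obtain ⟨u, huu, hspan⟩ := SemilatticeAlgAux.exists_idem_span hS s
  have humem : u ∈ TwoSidedIdeal.span (s : Set (MonoidAlgebra K S)) := by
    rw [hspan]
    exact TwoSidedIdeal.subset_span rfl
  refine ⟨u, humem, huu, hspan, ?_⟩
  -- the set of elements on which `u` acts as identity is a two-sided ideal
  have key : ∀ y ∈ TwoSidedIdeal.span ({u} : Set (MonoidAlgebra K S)), u * y = y := by
    have hJ : TwoSidedIdeal.span ({u} : Set (MonoidAlgebra K S)) ≤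
        TwoSidedIdeal.mk' {y : MonoidAlgebra K S | u * y = y}
          (by simp) (fun {x y} hx hy => by simp only [Set.mem_setOf_eq] at *; rw [mul_add, hx, hy])
          (fun {x} hx => by simp only [Set.mem_setOf_eq] at *; rw [mul_neg, hx])
          (fun {x y} hy => by
            simp only [Set.mem_setOf_eq] at *
            rw [mul_left_comm, hy])
          (fun {x y} hx => by
            simp only [Set.mem_setOf_eq] at *
            rw [← mul_assoc, hx]) := by
      rw [SemilatticeAlgAux.span_le']
      intro x hx
      rw [Set.mem_singleton_iff] at hx
      subst hx
      rw [SetLike.mem_coe, TwoSidedIdeal.mem_mk']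
      exact huu
    intro y hy
    have := hJ hy
    rwa [TwoSidedIdeal.mem_mk'] at this
  intro y hy
  rw [hspan] at hy
  exact ⟨key y hy, by rw [mul_comm]; exact key y hy⟩
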